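/- arXiv:2412.19290 — 2 statements merged into one kernel-verified Lean document; each statement's English description precedes it below -/
import Mathlib

section
/- Let n, j ∈ ℤ₊ and assume that φ is differentiable on (α,β) with φ′ extending to a function on [α,β] belonging to C_φ^{(n+j−2)} whenever n ≥ 2 (no condition is imposed if n = 0 or n = 1). Then there exist functions a_k ∈ C_φ^{(j)}, k = 0, …, n−1, such that for every n-times differentiable function u on (α,β) one has, on (α,β): X^n u = Σ_{k=0}^{n−1} a_k · φ^k · ∂_t^k u + φ^n · ∂_t^n u. -/
open Real Set Filter Topology

/-- The open interval `(α, β)` of real numbers, where `α β` are extended reals. -/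
def EI (α β : EReal) : Set ℝ := {x : ℝ | α < (x : EReal) ∧ (x : EReal) < β}

/-- `u : ℝ → ℝ` (thought of as a function on `(α, β)`) extends to a continuous
function on `[α, β] ⊆ EReal`. -/
def ContExt (α β : EReal) (u : ℝ → ℝ) : Prop :=
  ∃ g : EReal → ℝ, ContinuousOn g (Set.Icc α β) ∧
    ∀ x : ℝ, x ∈ EI α β → g (x : EReal) = u x

/-- The operator `X u := φ · u′`. -/
noncomputable def Xop (φ u : ℝ → ℝ) : ℝ → ℝ := fun x => φ x * deriv u x

/-- The iterates `X^k u`. -/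
noncomputable def Xiter (φ : ℝ → ℝ) : ℕ → (ℝ → ℝ) → (ℝ → ℝ)
  | 0, u => u
  | n + 1, u => Xop φ (Xiter φ n u)

/-- The space `C_φ^{(n)}`: inductively, `C_φ^{(0)}` consists of the functions having a
continuous extension to `[α, β]`, and `u ∈ C_φ^{(n+1)}` iff `u ∈ C_φ^{(n)}`, `X^n u` is
differentiable on `(α, β)`, and `X^{n+1} u` extends to a continuous function on `[α, β]`. -/
def CN (α β : EReal) (φ : ℝ → ℝ) : ℕ → Set (ℝ → ℝ)
  | 0 => {u | ContExt α β u}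
  | n + 1 => {u | u ∈ CN α β φ n ∧
      (∀ x ∈ EI α β, DifferentiableAt ℝ (Xiter φ n u) x) ∧
      ContExt α β (Xiter φ (n + 1) u)}

/-- The space `C_φ^{(∞)} := ⋂ₙ C_φ^{(n)}`. -/
def Cinf (α β : EReal) (φ : ℝ → ℝ) : Set (ℝ → ℝ) := ⋂ n : ℕ, CN α β φ n

/-- The spaces `C_φ^{(n)}` for `n ∈ ℤ₊ ∪ {∞}`. -/
def CNE (α β : EReal) (φ : ℝ → ℝ) (n : ℕ∞) : Set (ℝ → ℝ) :=
  WithTop.recTopCoe (Cinf α β φ) (fun k => CN α β φ k) n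

section Helpers

variable {α β : EReal} {φ u v : ℝ → ℝ}

lemma isOpen_EI : IsOpen (EI α β) := by
  have : EI α β = Real.toEReal ⁻¹' (Set.Ioo α β) := rfl
  rw [this]
  exact isOpen_Ioo.preimage continuous_coe_real_ereal

lemma EI_mem_nhds {x : ℝ} (hx : x ∈ EI α β) : EI α β ∈ 𝓝 x :=
  isOpen_EI.mem_nhds hx

lemma mem_CN_succ {m : ℕ} : u ∈ CN α β φ (m + 1) ↔ u ∈ CN α β φ m ∧
    (∀ x ∈ EI α β, DifferentiableAt ℝ (Xiter φ m u) x) ∧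
    ContExt α β (Xiter φ (m + 1) u) := Iff.rfl

lemma Xiter_congr (h : EqOn u v (EI α β)) :
    ∀ m, EqOn (Xiter φ m u) (Xiter φ m v) (EI α β) := by
  intro m
  induction m with
  | zero => exact h
  | succ m ih =>
    intro x hx
    show φ x * deriv (Xiter φ m u) x = φ x * deriv (Xiter φ m v) x
    congr 1
    exact Filter.EventuallyEq.deriv_eq (ih.eventuallyEq_of_mem (EI_mem_nhds hx))

lemma contExt_congr (h : EqOn u v (EI α β)) (hu : ContExt α β u) : ContExt α β v := by
  obtain ⟨g, hg, hgu⟩ := hu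
  exact ⟨g, hg, fun x hx => (hgu x hx).trans (h hx)⟩

lemma CN_congr (h : EqOn u v (EI α β)) {m : ℕ} (hu : u ∈ CN α β φ m) :
    v ∈ CN α β φ m := by
  induction m with
  | zero => exact contExt_congr h hu
  | succ m ih =>
    refine ⟨ih hu.1, fun x hx => ?_, contExt_congr (Xiter_congr h (m + 1)) hu.2.2⟩
    exact (hu.2.1 x hx).congr_of_eventuallyEq
      (((Xiter_congr h m).eventuallyEq_of_mem (EI_mem_nhds hx)).symm)

lemma CN_antitone {m m' : ℕ} (h : m ≤ m') : CN α β φ m' ⊆ CN α β φ m := by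
  induction h with
  | refl => exact subset_rfl
  | step _ ih => exact fun u hu => ih hu.1

lemma cn_contExt {m : ℕ} (hu : u ∈ CN α β φ m) : ∀ i ≤ m, ContExt α β (Xiter φ i u) := by
  induction m with
  | zero => intro i hi; interval_cases i; exact hu
  | succ m ih =>
    intro i hi
    rcases Nat.eq_or_lt_of_le hi with rfl | hlt
    · exact hu.2.2
    · exact ih hu.1 i (Nat.lt_succ_iff.mp hlt)

lemma cn_diff {m : ℕ} (hu : u ∈ CN α β φ m) :
    ∀ i < m, ∀ x ∈ EI α β, DifferentiableAt ℝ (Xiter φ i u) x := by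
  induction m with
  | zero => intro i hi; omega
  | succ m ih =>
    intro i hi
    rcases Nat.eq_or_lt_of_le (Nat.lt_succ_iff.mp hi) with rfl | hlt
    · exact hu.2.1
    · exact ih hu.1 i hlt

lemma cn_of {m : ℕ} (h1 : ∀ i ≤ m, ContExt α β (Xiter φ i u))
    (h2 : ∀ i < m, ∀ x ∈ EI α β, DifferentiableAt ℝ (Xiter φ i u) x) :
    u ∈ CN α β φ m := by
  induction m with
  | zero => exact h1 0 le_rfl
  | succ m ih =>
    exact ⟨ih (fun i hi => h1 i (hi.trans (Nat.le_succ m)))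
        (fun i hi => h2 i (hi.trans (Nat.lt_succ_self m))),
      h2 m (Nat.lt_succ_self m), h1 (m + 1) le_rfl⟩

lemma Xiter_succ_comm (m : ℕ) (u : ℝ → ℝ) :
    Xiter φ (m + 1) u = Xiter φ m (Xop φ u) := by
  induction m with
  | zero => rfl
  | succ m ih => show Xop φ (Xiter φ (m+1) u) = Xop φ (Xiter φ m (Xop φ u)); rw [ih]

lemma CN_succ_iff {m : ℕ} : u ∈ CN α β φ (m + 1) ↔ u ∈ CN α β φ 1 ∧ Xop φ u ∈ CN α β φ m := by
  induction m with
  | zero =>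
    constructor
    · intro h; exact ⟨h, h.2.2⟩
    · rintro ⟨h, _⟩; exact h
  | succ m ih =>
    rw [mem_CN_succ, ih, @mem_CN_succ _ _ _ (Xop φ u) m, ← Xiter_succ_comm, ← Xiter_succ_comm]
    tauto

lemma X_mem_CN {m : ℕ} (hu : u ∈ CN α β φ (m + 1)) : Xop φ u ∈ CN α β φ m :=
  (CN_succ_iff.mp hu).2

end Helpers

section Helpers2

variable {α β : EReal} {φ u v : ℝ → ℝ}

lemma Xop_zero : Xop φ (fun _ => (0:ℝ)) = fun _ => 0 := by
  funext x; simp [Xop]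

lemma Xiter_zero : ∀ m, Xiter φ m (fun _ => (0:ℝ)) = fun _ => 0 := by
  intro m
  induction m with
  | zero => rfl
  | succ m ih => show Xop φ (Xiter φ m (fun _ => 0)) = _; rw [ih, Xop_zero]

lemma Xop_const (c : ℝ) : Xop φ (fun _ => c) = fun _ => 0 := by
  funext x; simp [Xop]

lemma Xiter_const_succ (c : ℝ) (m : ℕ) : Xiter φ (m + 1) (fun _ => c) = fun _ => 0 := by
  rw [Xiter_succ_comm, Xop_const, Xiter_zero]

lemma contExt_const (c : ℝ) : ContExt α β (fun _ => c) :=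
  ⟨fun _ => c, continuousOn_const, fun _ _ => rfl⟩

lemma const_mem_CN (c : ℝ) (m : ℕ) : (fun _ => c) ∈ CN α β φ m := by
  refine cn_of (fun i hi => ?_) (fun i hi x hx => ?_)
  · cases i with
    | zero => exact contExt_const c
    | succ i => rw [Xiter_const_succ]; exact contExt_const 0
  · cases i with
    | zero => exact differentiableAt_const c
    | succ i => rw [Xiter_const_succ]; exact differentiableAt_const 0

lemma zero_mem_CN (m : ℕ) : (fun _ => (0:ℝ)) ∈ CN α β φ m := const_mem_CN 0 m

lemma contExt_add (hu : ContExt α β u) (hv : ContExt α β v) :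
    ContExt α β (fun x => u x + v x) := by
  obtain ⟨g, hg, hgu⟩ := hu
  obtain ⟨g', hg', hgv⟩ := hv
  exact ⟨fun e => g e + g' e, hg.add hg', fun x hx => by show g ↑x + g' ↑x = u x + v x; rw [hgu x hx, hgv x hx]⟩

lemma contExt_mul (hu : ContExt α β u) (hv : ContExt α β v) :
    ContExt α β (fun x => u x * v x) := by
  obtain ⟨g, hg, hgu⟩ := hu
  obtain ⟨g', hg', hgv⟩ := hv
  exact ⟨fun e => g e * g' e, hg.mul hg', fun x hx => by show g ↑x * g' ↑x = u x * v x; rw [hgu x hx, hgv x hx]⟩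

lemma Xiter_add_eqOn {m : ℕ} (hu : u ∈ CN α β φ m) (hv : v ∈ CN α β φ m) :
    ∀ i ≤ m, EqOn (Xiter φ i (fun x => u x + v x))
      (fun x => Xiter φ i u x + Xiter φ i v x) (EI α β) := by
  intro i
  induction i with
  | zero => intro _ x _; rfl
  | succ i ih =>
    intro hi x hx
    have hle : i ≤ m := (Nat.le_succ i).trans hi
    have hlt : i < m := hi
    show φ x * deriv (Xiter φ i (fun x => u x + v x)) x = _
    have h1 : deriv (Xiter φ i (fun x => u x + v x)) x
        = deriv (fun x => Xiter φ i u x + Xiter φ i v x) x :=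
      Filter.EventuallyEq.deriv_eq (((ih hle)).eventuallyEq_of_mem (EI_mem_nhds hx))
    rw [h1, deriv_fun_add (cn_diff hu i hlt x hx) (cn_diff hv i hlt x hx)]
    show φ x * _ = φ x * deriv (Xiter φ i u) x + φ x * deriv (Xiter φ i v) x
    ring

lemma CN_add {m : ℕ} (hu : u ∈ CN α β φ m) (hv : v ∈ CN α β φ m) :
    (fun x => u x + v x) ∈ CN α β φ m := by
  refine cn_of (fun i hi => ?_) (fun i hi x hx => ?_)
  · exact contExt_congr (Xiter_add_eqOn hu hv i hi).symm
      (contExt_add (cn_contExt hu i hi) (cn_contExt hv i hi))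
  · exact ((cn_diff hu i hi x hx).add (cn_diff hv i hi x hx)).congr_of_eventuallyEq
      ((Xiter_add_eqOn hu hv i hi.le).eventuallyEq_of_mem (EI_mem_nhds hx))

lemma CN_mul : ∀ {m : ℕ}, u ∈ CN α β φ m → v ∈ CN α β φ m →
    (fun x => u x * v x) ∈ CN α β φ m := by
  intro m
  induction m generalizing u v with
  | zero => exact fun hu hv => contExt_mul hu hv
  | succ m ih =>
    intro hu hv
    have hdu : ∀ x ∈ EI α β, DifferentiableAt ℝ u x := cn_diff hu 0 (Nat.succ_pos m)
    have hdv : ∀ x ∈ EI α β, DifferentiableAt ℝ v x := cn_diff hv 0 (Nat.succ_pos m)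
    have heq : EqOn (Xop φ (fun x => u x * v x))
        (fun x => Xop φ u x * v x + u x * Xop φ v x) (EI α β) := by
      intro x hx
      show φ x * deriv (fun x => u x * v x) x = _
      rw [deriv_fun_mul (hdu x hx) (hdv x hx)]
      show _ = φ x * deriv u x * v x + u x * (φ x * deriv v x)
      ring
    have hw : (fun x => Xop φ u x * v x + u x * Xop φ v x) ∈ CN α β φ m :=
      CN_add (ih (X_mem_CN hu) hv.1) (ih hu.1 (X_mem_CN hv))
    have hX : Xop φ (fun x => u x * v x) ∈ CN α β φ m := CN_congr heq.symm hw
    refine CN_succ_iff.mpr ⟨⟨contExt_mul (cn_contExt hu 0 (Nat.zero_le _)) (cn_contExt hv 0 (Nat.zero_le _)), ?_, ?_⟩, hX⟩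
    · exact fun x hx => (hdu x hx).mul (hdv x hx)
    · exact cn_contExt hX 0 (Nat.zero_le _)

end Helpers2
/-- Coefficients of the expansion of `X^n` in powers of `φ` times derivatives. -/
noncomputable def Acoef (φ : ℝ → ℝ) : ℕ → ℕ → ℝ → ℝ
  | 0, 0 => fun _ => 1
  | 0, _ + 1 => fun _ => 0
  | m + 1, 0 => Xop φ (Acoef φ m 0)
  | m + 1, k + 1 => fun x => Xop φ (Acoef φ m (k + 1)) x
      + ((k : ℝ) + 1) * deriv φ x * Acoef φ m (k + 1) x + Acoef φ m k x

section Helpers3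

variable {α β : EReal} {φ : ℝ → ℝ}

lemma Acoef_zero_zero : Acoef φ 0 0 = fun _ => 1 := rfl
lemma Acoef_zero_succ (k : ℕ) : Acoef φ 0 (k + 1) = fun _ => 0 := rfl
lemma Acoef_succ_zero (m : ℕ) : Acoef φ (m + 1) 0 = Xop φ (Acoef φ m 0) := rfl
lemma Acoef_succ_succ (m k : ℕ) : Acoef φ (m + 1) (k + 1) = fun x =>
    Xop φ (Acoef φ m (k + 1)) x + ((k : ℝ) + 1) * deriv φ x * Acoef φ m (k + 1) x
      + Acoef φ m k x := rfl

lemma Acoef_gt : ∀ m k, m < k → Acoef φ m k = fun _ => 0 := by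
  intro m
  induction m with
  | zero =>
    intro k hk
    cases k with
    | zero => omega
    | succ k => rfl
  | succ m ih =>
    intro k hk
    cases k with
    | zero => omega
    | succ k =>
      rw [Acoef_succ_succ, ih (k + 1) (by omega), ih k (by omega), Xop_zero]
      funext x; simp

lemma Acoef_diag : ∀ m, Acoef φ m m = fun _ => 1 := by
  intro m
  induction m with
  | zero => rfl
  | succ m ih =>
    rw [Acoef_succ_succ, Acoef_gt m (m + 1) (by omega), ih, Xop_zero]
    funext x; simp

lemma Acoef_mem_CN : ∀ (m : ℕ) (j : ℕ),
    (2 ≤ m → deriv φ ∈ CN α β φ (m + j - 2)) → ∀ k, Acoef φ m k ∈ CN α β φ j := by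
  intro m
  induction m with
  | zero =>
    intro j _ k
    cases k with
    | zero => exact const_mem_CN 1 j
    | succ k => exact zero_mem_CN j
  | succ m ih =>
    intro j h k
    rcases Nat.eq_zero_or_pos m with rfl | hm
    · -- m = 0 : A 1 0 = 0, A 1 (k+1) = A 0 k pointwise
      cases k with
      | zero =>
        have : Acoef φ 1 0 = fun _ => (0:ℝ) := by
          rw [Acoef_succ_zero, Acoef_zero_zero, Xop_const]
        rw [this]; exact zero_mem_CN j
      | succ k =>
        have : Acoef φ 1 (k + 1) = Acoef φ 0 k := by
          rw [Acoef_succ_succ, Acoef_zero_succ, Xop_zero]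
          funext x; simp
        rw [this]
        exact ih j (by omega) k
    · -- m ≥ 1
      have hφ' : deriv φ ∈ CN α β φ (m + j - 1) := by
        have := h (by omega)
        have e : m + 1 + j - 2 = m + j - 1 := by omega
        rwa [e] at this
      have hφ'j : deriv φ ∈ CN α β φ j := CN_antitone (by omega) hφ'
      have hA1 : ∀ k', Acoef φ m k' ∈ CN α β φ (j + 1) := by
        refine ih (j + 1) (fun h2 => ?_)
        have e : m + (j + 1) - 2 = m + j - 1 := by omega
        rwa [e]
      have hAj : ∀ k', Acoef φ m k' ∈ CN α β φ j :=
        fun k' => CN_antitone (Nat.le_succ j) (hA1 k')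
      cases k with
      | zero =>
        rw [Acoef_succ_zero]
        exact X_mem_CN (hA1 0)
      | succ k =>
        rw [Acoef_succ_succ]
        refine CN_add (CN_add (X_mem_CN (hA1 (k + 1))) ?_) (hAj k)
        exact CN_mul (CN_mul (const_mem_CN ((k : ℝ) + 1) j) hφ'j) (hAj (k + 1))

end Helpers3
section Helpers4

variable {α β : EReal} {φ : ℝ → ℝ}

lemma Xiter_eq_sum : ∀ (m : ℕ),
    (∀ m' < m, ∀ k, ∀ x ∈ EI α β, DifferentiableAt ℝ (Acoef φ m' k) x) →
    (2 ≤ m → ∀ x ∈ EI α β, DifferentiableAt ℝ φ x) →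
    ∀ u : ℝ → ℝ, (∀ k < m, ∀ x ∈ EI α β, DifferentiableAt ℝ (iteratedDeriv k u) x) →
    ∀ x ∈ EI α β, Xiter φ m u x =
      ∑ k ∈ Finset.range (m + 1), Acoef φ m k x * φ x ^ k * iteratedDeriv k u x := by
  intro m
  induction m with
  | zero =>
    intro _ _ u _ x hx
    simp [Xiter, Acoef_zero_zero, iteratedDeriv_zero]
  | succ m ih =>
    intro hA hφd u hu x hx
    rcases Nat.eq_zero_or_pos m with rfl | hm
    · -- m + 1 = 1
      show φ x * deriv (Xiter φ 0 u) x = _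
      simp [Xiter, Finset.sum_range_succ, Acoef_succ_zero, Acoef_succ_succ,
        Acoef_zero_zero, Acoef_zero_succ, Xop, iteratedDeriv_one, iteratedDeriv_zero]
    · -- m ≥ 1
      have hφx : ∀ y ∈ EI α β, DifferentiableAt ℝ φ y := hφd (by omega)
      have heqon : EqOn (Xiter φ m u)
          (fun y => ∑ k ∈ Finset.range (m + 1),
            Acoef φ m k y * φ y ^ k * iteratedDeriv k u y) (EI α β) :=
        ih (fun m' h k => hA m' (by omega) k) (fun h2 => hφd (by omega)) u
          (fun k hk => hu k (by omega))
      have hder : ∀ k ∈ Finset.range (m + 1),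
          HasDerivAt (fun y => Acoef φ m k y * φ y ^ k * iteratedDeriv k u y)
            ((deriv (Acoef φ m k) x * φ x ^ k
                + Acoef φ m k x * ((k : ℝ) * φ x ^ (k - 1) * deriv φ x))
              * iteratedDeriv k u x
              + Acoef φ m k x * φ x ^ k * iteratedDeriv (k + 1) u x) x := by
        intro k hk
        have hk' : k < m + 1 := Finset.mem_range.mp hk
        have hA' := (hA m (Nat.lt_succ_self m) k x hx).hasDerivAt
        have hφ' := (hφx x hx).hasDerivAt
        have hu' : HasDerivAt (iteratedDeriv k u) (iteratedDeriv (k + 1) u x) x := by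
          rw [iteratedDeriv_succ]
          exact (hu k hk' x hx).hasDerivAt
        exact (hA'.mul (hφ'.pow k)).mul hu'
      have hXm : deriv (Xiter φ m u) x
          = ∑ k ∈ Finset.range (m + 1),
              ((deriv (Acoef φ m k) x * φ x ^ k
                  + Acoef φ m k x * ((k : ℝ) * φ x ^ (k - 1) * deriv φ x))
                * iteratedDeriv k u x
                + Acoef φ m k x * φ x ^ k * iteratedDeriv (k + 1) u x) := by
        rw [Filter.EventuallyEq.deriv_eq (heqon.eventuallyEq_of_mem (EI_mem_nhds hx))]
        exact (HasDerivAt.fun_sum hder).deriv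
      show φ x * deriv (Xiter φ m u) x = _
      rw [hXm, Finset.mul_sum]
      set T1 : ℕ → ℝ := fun k =>
        (Xop φ (Acoef φ m k) x + (k : ℝ) * deriv φ x * Acoef φ m k x)
          * φ x ^ k * iteratedDeriv k u x with hT1
      set T2 : ℕ → ℝ := fun k =>
        Acoef φ m k x * φ x ^ (k + 1) * iteratedDeriv (k + 1) u x with hT2
      have hL : ∀ k ∈ Finset.range (m + 1),
          φ x * ((deriv (Acoef φ m k) x * φ x ^ k
              + Acoef φ m k x * ((k : ℝ) * φ x ^ (k - 1) * deriv φ x))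
            * iteratedDeriv k u x
            + Acoef φ m k x * φ x ^ k * iteratedDeriv (k + 1) u x)
          = T1 k + T2 k := by
        intro k _
        cases k with
        | zero => simp [hT1, hT2, Xop]; ring
        | succ k =>
          simp only [hT1, hT2, Xop, pow_succ, Nat.add_sub_cancel, Nat.cast_add,
            Nat.cast_one]
          ring
      rw [Finset.sum_congr rfl hL, Finset.sum_add_distrib]
      have hR : ∑ k ∈ Finset.range (m + 1 + 1),
          Acoef φ (m + 1) k x * φ x ^ k * iteratedDeriv k u x
          = (∑ k ∈ Finset.range (m + 1), T1 k) + ∑ k ∈ Finset.range (m + 1), T2 k := by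
        rw [Finset.sum_range_succ' _ (m + 1)]
        have h1 : ∀ k ∈ Finset.range (m + 1),
            Acoef φ (m + 1) (k + 1) x * φ x ^ (k + 1) * iteratedDeriv (k + 1) u x
            = T1 (k + 1) + T2 k := by
          intro k _
          simp only [Acoef_succ_succ, hT1, hT2, Nat.cast_add, Nat.cast_one]
          ring
        rw [Finset.sum_congr rfl h1, Finset.sum_add_distrib]
        have h2 : Acoef φ (m + 1) 0 x * φ x ^ 0 * iteratedDeriv 0 u x = T1 0 := by
          simp [Acoef_succ_zero, hT1]
        rw [h2]
        have h3 : (∑ k ∈ Finset.range (m + 1), T1 (k + 1)) + T1 0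
            = ∑ k ∈ Finset.range (m + 1), T1 k := by
          rw [← Finset.sum_range_succ' T1 (m + 1), Finset.sum_range_succ]
          have hz : T1 (m + 1) = 0 := by
            rw [hT1]
            simp [Acoef_gt m (m + 1) (Nat.lt_succ_self m), Xop]
          rw [hz, add_zero]
        linarith [h3]
      rw [hR]

end Helpers4

/-- if `φ′` extends to a function on `[α,β]` belonging to `C_φ^{(n+j−2)}`
whenever `n ≥ 2`, then there exist `a_k ∈ C_φ^{(j)}`, `k = 0, …, n−1`, such that on
`(α,β)`, for every `n`-times differentiable `u`,
`X^n u = Σ_{k=0}^{n−1} a_k φ^k ∂_t^k u + φ^n ∂_t^n u`. -/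
theorem Xiter_expansion (α β : EReal) (hαβ : α < β) (φ : ℝ → ℝ)
    (hφc : ContinuousOn φ (EI α β)) (hφpos : ∀ x ∈ EI α β, 0 < φ x)
    (n j : ℕ)
    (hφ' : 2 ≤ n → (∀ x ∈ EI α β, DifferentiableAt ℝ φ x) ∧
      deriv φ ∈ CN α β φ (n + j - 2)) :
    ∃ a : ℕ → (ℝ → ℝ), (∀ k < n, a k ∈ CN α β φ j) ∧
      ∀ u : ℝ → ℝ,
        (∀ k < n, ∀ x ∈ EI α β, DifferentiableAt ℝ (iteratedDeriv k u) x) →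
        ∀ x ∈ EI α β,
          Xiter φ n u x =
            (∑ k ∈ Finset.range n, a k x * φ x ^ k * iteratedDeriv k u x)
              + φ x ^ n * iteratedDeriv n u x := by
  refine ⟨Acoef φ n, fun k _ => Acoef_mem_CN n j (fun h2 => (hφ' h2).2) k, ?_⟩
  intro u hu x hx
  have hA : ∀ m' < n, ∀ k, ∀ x ∈ EI α β, DifferentiableAt ℝ (Acoef φ m' k) x := by
    intro m' hm' k x' hx'
    have hmem : Acoef φ m' k ∈ CN α β φ 1 :=
      Acoef_mem_CN m' 1
        (fun h2 => CN_antitone (by omega) (hφ' (by omega)).2) k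
    exact cn_diff hmem 0 one_pos x' hx'
  have hkey := Xiter_eq_sum n hA (fun h2 => (hφ' h2).1) u hu x hx
  rw [hkey, Finset.sum_range_succ, Acoef_diag]
  simp
end

section
/- Assume that for every k ∈ ℤ₊ the function φ is (k+1)-times differentiable on (α,β) and φ^k · ∂_t^{k+1} φ extends to a continuous function on [α,β]. Let η : [α,β] → ℝ be continuous and such that, for every k ∈ ℤ₊, η is k-times differentiable on (α,β) and φ^k · ∂_t^k η extends to a continuous function on [α,β]. Then η ∈ C_φ^{(∞)}. -/
open Real Set Filter Topology

lemma EI_open (α β : EReal) : IsOpen (EI α β) := by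
  have : EI α β = ((↑) : ℝ → EReal) ⁻¹' (Set.Ioo α β) := rfl
  rw [this]
  exact (isOpen_Ioo).preimage continuous_coe_real_ereal

lemma ContExt.congr {α β : EReal} {u v : ℝ → ℝ} (h : ContExt α β u)
    (he : ∀ x ∈ EI α β, v x = u x) : ContExt α β v := by
  obtain ⟨g, hg, hgu⟩ := h
  exact ⟨g, hg, fun x hx => (hgu x hx).trans (he x hx).symm⟩

lemma ContExt.mul {α β : EReal} {u v : ℝ → ℝ} (hu : ContExt α β u) (hv : ContExt α β v) :
    ContExt α β (fun x => u x * v x) := by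
  obtain ⟨g, hg, hgu⟩ := hu
  obtain ⟨h, hh, hhv⟩ := hv
  exact ⟨fun e => g e * h e, hg.mul hh, fun x hx => by simp only []; rw [hgu x hx, hhv x hx]⟩

lemma ContExt.const_mul {α β : EReal} {u : ℝ → ℝ} (c : ℝ) (hu : ContExt α β u) :
    ContExt α β (fun x => c * u x) := by
  obtain ⟨g, hg, hgu⟩ := hu
  exact ⟨fun e => c * g e, (continuousOn_const).mul hg, fun x hx => by simp only []; rw [hgu x hx]⟩

lemma ContExt.sum {α β : EReal} {t : Finset ℕ} {F : ℕ → (ℝ → ℝ)}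
    (h : ∀ j ∈ t, ContExt α β (F j)) :
    ContExt α β (fun x => ∑ j ∈ t, F j x) := by
  classical
  induction t using Finset.induction with
  | empty => exact ⟨fun _ => 0, continuousOn_const, fun x hx => by simp⟩
  | @insert a s hj ih =>
    obtain ⟨g, hg, hgu⟩ := h a (Finset.mem_insert_self a s)
    obtain ⟨k, hk, hku⟩ := ih (fun j hjs => h j (Finset.mem_insert_of_mem hjs))
    refine ⟨fun e => g e + k e, hg.add hk, fun x hx => ?_⟩
    simp only []; rw [Finset.sum_insert hj, hgu x hx, hku x hx]


lemma sum_diffAt {s : Set ℝ} (hs : IsOpen s) {a b : ℝ → ℝ} (k : ℕ)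
    (ha : ∀ i, ∀ x ∈ s, DifferentiableAt ℝ (iteratedDeriv i a) x)
    (hb : ∀ i, ∀ x ∈ s, DifferentiableAt ℝ (iteratedDeriv i b) x)
    {x : ℝ} (hx : x ∈ s) :
    DifferentiableAt ℝ (fun y => ∑ j ∈ Finset.range (k+1),
      (k.choose j : ℝ) * (iteratedDeriv j a y * iteratedDeriv (k-j) b y)) x := by
  apply DifferentiableAt.fun_sum
  intro j _
  exact ((ha j x hx).mul (hb (k-j) x hx)).const_mul _

lemma iteratedDeriv_mul_eqOn {s : Set ℝ} (hs : IsOpen s) {a b : ℝ → ℝ}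
    (ha : ∀ i, ∀ x ∈ s, DifferentiableAt ℝ (iteratedDeriv i a) x)
    (hb : ∀ i, ∀ x ∈ s, DifferentiableAt ℝ (iteratedDeriv i b) x) (k : ℕ) :
    ∀ x ∈ s, iteratedDeriv k (fun y => a y * b y) x
      = ∑ j ∈ Finset.range (k+1),
        (k.choose j : ℝ) * (iteratedDeriv j a x * iteratedDeriv (k-j) b x) := by
  induction k with
  | zero => intro x hx; simp [iteratedDeriv_zero]
  | succ k IH =>
    intro x hx
    have heq : iteratedDeriv k (fun y => a y * b y) =ᶠ[nhds x]
        (fun y => ∑ j ∈ Finset.range (k+1),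
          (k.choose j : ℝ) * (iteratedDeriv j a y * iteratedDeriv (k-j) b y)) :=
      Filter.eventually_of_mem (hs.mem_nhds hx) (fun y hy => IH y hy)
    rw [iteratedDeriv_succ, heq.deriv_eq, deriv_fun_sum (A := fun j y => (k.choose j : ℝ) * (iteratedDeriv j a y * iteratedDeriv (k-j) b y))
      (fun j _ => ((ha j x hx).mul (hb (k-j) x hx)).const_mul _)]
    have hterm : ∀ j ∈ Finset.range (k+1),
        deriv (fun y => (k.choose j : ℝ) * (iteratedDeriv j a y * iteratedDeriv (k-j) b y)) x
        = (k.choose j : ℝ) * (iteratedDeriv (j+1) a x * iteratedDeriv (k-j) b x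
            + iteratedDeriv j a x * iteratedDeriv (k-j+1) b x) := by
      intro j _
      rw [deriv_const_mul _ ((ha j x hx).fun_mul (hb (k-j) x hx)),
        deriv_fun_mul (ha j x hx) (hb (k-j) x hx)]
      rw [show deriv (iteratedDeriv j a) x = iteratedDeriv (j+1) a x from
        (congrFun (iteratedDeriv_succ).symm x),
        show deriv (iteratedDeriv (k-j) b) x = iteratedDeriv (k-j+1) b x from
        (congrFun (iteratedDeriv_succ).symm x)]
    rw [Finset.sum_congr rfl hterm]
    -- now the binomial recombination
    have : ∑ j ∈ Finset.range (k+1),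
        (k.choose j : ℝ) * (iteratedDeriv (j+1) a x * iteratedDeriv (k-j) b x
          + iteratedDeriv j a x * iteratedDeriv (k-j+1) b x)
        = ∑ j ∈ Finset.range (k+2),
          ((k+1).choose j : ℝ) * (iteratedDeriv j a x * iteratedDeriv (k+1-j) b x) := by
      set A := fun j => iteratedDeriv j a x
      set B := fun j => iteratedDeriv j b x
      have hsplit : ∀ j ∈ Finset.range (k+1),
          (k.choose j : ℝ) * (A (j+1) * B (k-j) + A j * B (k-j+1))
          = (k.choose j : ℝ) * (A (j+1) * B (k-j)) + (k.choose j : ℝ) * (A j * B (k+1-j)) := by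
        intro j hj
        rw [Finset.mem_range] at hj
        have : k - j + 1 = k + 1 - j := by omega
        rw [this]; ring
      rw [Finset.sum_congr rfl hsplit, Finset.sum_add_distrib]
      rw [Finset.sum_range_succ' (fun j => ((k+1).choose j : ℝ) * (A j * B (k+1-j))) (k+1)]
      have h1 : ∑ j ∈ Finset.range (k+1),
          ((k+1).choose (j+1) : ℝ) * (A (j+1) * B (k+1-(j+1)))
          = ∑ j ∈ Finset.range (k+1),
            ((k.choose j : ℝ) * (A (j+1) * B (k-j)) + (k.choose (j+1) : ℝ) * (A (j+1) * B (k-j))) := by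
        apply Finset.sum_congr rfl
        intro j hj
        have : k + 1 - (j+1) = k - j := by omega
        rw [this, Nat.choose_succ_succ]
        push_cast
        ring
      rw [h1, Finset.sum_add_distrib]
      have h2 : ∑ j ∈ Finset.range (k+1), (k.choose (j+1) : ℝ) * (A (j+1) * B (k-j))
          = ∑ j ∈ Finset.range (k+1), (fun j => (k.choose j : ℝ) * (A j * B (k+1-j))) (j+1) := by
        apply Finset.sum_congr rfl
        intro j hj
        simp [Nat.succ_sub_succ]
      have h3 : ∑ j ∈ Finset.range (k+1), (k.choose j : ℝ) * (A j * B (k+1-j))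
          = ∑ j ∈ Finset.range k, (fun j => (k.choose j : ℝ) * (A j * B (k+1-j))) (j+1)
            + (k.choose 0 : ℝ) * (A 0 * B (k+1)) :=
        Finset.sum_range_succ' _ k
      have h4 : ∑ j ∈ Finset.range (k+1), (fun j => (k.choose j : ℝ) * (A j * B (k+1-j))) (j+1)
          = ∑ j ∈ Finset.range k, (fun j => (k.choose j : ℝ) * (A j * B (k+1-j))) (j+1) := by
        rw [Finset.sum_range_succ]
        simp [Nat.choose_succ_self]
      rw [h2, h4, h3]
      simp
      ring
    rw [this]

lemma iteratedDeriv_mul_diffAt {s : Set ℝ} (hs : IsOpen s) {a b : ℝ → ℝ}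
    (ha : ∀ i, ∀ x ∈ s, DifferentiableAt ℝ (iteratedDeriv i a) x)
    (hb : ∀ i, ∀ x ∈ s, DifferentiableAt ℝ (iteratedDeriv i b) x) (k : ℕ)
    {x : ℝ} (hx : x ∈ s) :
    DifferentiableAt ℝ (iteratedDeriv k (fun y => a y * b y)) x := by
  have heq : iteratedDeriv k (fun y => a y * b y) =ᶠ[nhds x]
      (fun y => ∑ j ∈ Finset.range (k+1),
        (k.choose j : ℝ) * (iteratedDeriv j a y * iteratedDeriv (k-j) b y)) :=
    Filter.eventually_of_mem (hs.mem_nhds hx) (fun y hy => iteratedDeriv_mul_eqOn hs ha hb k y hy)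
  exact heq.differentiableAt_iff.mpr (sum_diffAt hs k ha hb hx)


lemma P_Xop (α β : EReal) (φ : ℝ → ℝ)
    (hφd : ∀ i, ∀ x ∈ EI α β, DifferentiableAt ℝ (iteratedDeriv i φ) x)
    (hφe : ∀ i, ContExt α β (fun x => φ x ^ i * iteratedDeriv (i+1) φ x))
    {f : ℝ → ℝ}
    (hfd : ∀ i, ∀ x ∈ EI α β, DifferentiableAt ℝ (iteratedDeriv i f) x)
    (hfe : ∀ i, ContExt α β (fun x => φ x ^ i * iteratedDeriv i f x)) :
    (∀ k, ∀ x ∈ EI α β, DifferentiableAt ℝ (iteratedDeriv k (Xop φ f)) x) ∧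
    (∀ k, ContExt α β (fun x => φ x ^ k * iteratedDeriv k (Xop φ f) x)) := by
  have hs : IsOpen (EI α β) := EI_open α β
  have hb : ∀ i, ∀ x ∈ EI α β, DifferentiableAt ℝ (iteratedDeriv i (deriv f)) x := by
    intro i x hx
    rw [← iteratedDeriv_succ']
    exact hfd (i+1) x hx
  have hX : Xop φ f = fun y => φ y * deriv f y := rfl
  constructor
  · intro k x hx
    rw [hX]
    exact iteratedDeriv_mul_diffAt hs hφd hb k hx
  · intro k
    have hT : ∀ j ∈ Finset.range (k+1), ContExt α β
        (fun x => (k.choose j : ℝ) *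
          (φ x ^ k * (iteratedDeriv j φ x * iteratedDeriv (k-j) (deriv f) x))) := by
      intro j hj
      rw [Finset.mem_range] at hj
      match j with
      | 0 =>
        apply (ContExt.const_mul ((k.choose 0 : ℕ) : ℝ) (hfe (k+1))).congr
        intro x _
        simp only [iteratedDeriv_zero, ← iteratedDeriv_succ', Nat.choose_zero_right,
          Nat.cast_one, Nat.sub_zero, pow_succ]
        ring
      | i + 1 =>
        have hik : i + 1 ≤ k := by omega
        apply (ContExt.const_mul ((k.choose (i+1) : ℕ) : ℝ)
          ((hφe i).mul (hfe (k - i)))).congr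
        intro x _
        have h1 : iteratedDeriv (k - (i+1)) (deriv f) x = iteratedDeriv (k - i) f x := by
          rw [← iteratedDeriv_succ']
          congr 1
          omega
        have h2 : φ x ^ k = φ x ^ i * φ x ^ (k - i) := by
          rw [← pow_add]
          congr 1
          omega
        simp only [h1, h2]
        ring
    apply (ContExt.sum hT).congr
    intro x hx
    rw [hX, iteratedDeriv_mul_eqOn hs hφd hb k x hx, Finset.mul_sum]
    apply Finset.sum_congr rfl
    intro j _
    ring

/-- assume that for every `k` the function `φ` is `(k+1)`-times
differentiable on `(α,β)` and `φ^k ∂_t^{k+1} φ` extends continuously to `[α,β]`.  If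
`η : [α,β] → ℝ` is continuous and for every `k` it is `k`-times differentiable on
`(α,β)` with `φ^k ∂_t^k η` extending continuously to `[α,β]`, then `η ∈ C_φ^{(∞)}`. -/
theorem mem_Cinf_of_powers (α β : EReal) (hαβ : α < β) (φ : ℝ → ℝ)
    (hφc : ContinuousOn φ (EI α β)) (hφpos : ∀ x ∈ EI α β, 0 < φ x)
    (hφ : ∀ k : ℕ,
      (∀ i < k + 1, ∀ x ∈ EI α β, DifferentiableAt ℝ (iteratedDeriv i φ) x) ∧
        ContExt α β (fun x => φ x ^ k * iteratedDeriv (k + 1) φ x))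
    (η : ℝ → ℝ) (hηc : ContExt α β η)
    (hη : ∀ k : ℕ,
      (∀ i < k, ∀ x ∈ EI α β, DifferentiableAt ℝ (iteratedDeriv i η) x) ∧
        ContExt α β (fun x => φ x ^ k * iteratedDeriv k η x)) :
    η ∈ Cinf α β φ := by
  have hφd : ∀ i, ∀ x ∈ EI α β, DifferentiableAt ℝ (iteratedDeriv i φ) x :=
    fun i => (hφ i).1 i (Nat.lt_succ_self i)
  have hφe : ∀ i, ContExt α β (fun x => φ x ^ i * iteratedDeriv (i+1) φ x) :=
    fun i => (hφ i).2
  have hP : ∀ n, (∀ k, ∀ x ∈ EI α β, DifferentiableAt ℝ (iteratedDeriv k (Xiter φ n η)) x) ∧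
      (∀ k, ContExt α β (fun x => φ x ^ k * iteratedDeriv k (Xiter φ n η) x)) := by
    intro n
    induction n with
    | zero => exact ⟨fun k => (hη (k+1)).1 k (Nat.lt_succ_self k), fun k => (hη k).2⟩
    | succ n ih => exact P_Xop α β φ hφd hφe ih.1 ih.2
  have hmem : ∀ n, η ∈ CN α β φ n := by
    intro n
    induction n with
    | zero => exact hηc
    | succ n ih =>
      refine ⟨ih, ?_, ?_⟩
      · intro x hx
        have h := (hP n).1 0 x hx
        rwa [iteratedDeriv_zero] at h
      · apply ((hP (n+1)).2 0).congr
        intro x _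
        simp [iteratedDeriv_zero]
  exact Set.mem_iInter.mpr hmem
end
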